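/- Let s ↦ (r(s),θ(s)) be any C² solution of the static scale-invariant system. Then the geodesic-curvature expression k(s) = r^{−1/2}·(r·r̈·θ̇ − r·θ̇³/2 − r·θ̈·ṙ − ṙ²·θ̇) satisfies k(s) = d/ds(−(1/2)·r(s)^{−1/2}·θ(s)); equivalently k(s) = r^{−1/2}(ṙθ/(4r) − θ̇/2). Consequently, if θ(s₁) = 0 = θ(s₂), then ∫_{s₁}^{s₂} k(s) ds = 0. -/

import Mathlib

open Set MeasureTheory

/-- The geodesic-curvature expression along a solution of the static scale-invariant
system for the model metric `ds² = dr² + r dθ²`. -/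
noncomputable def staticCurvature (r θ : ℝ → ℝ) (s : ℝ) : ℝ :=
  (Real.sqrt (r s))⁻¹ *
    (r s * deriv (deriv r) s * deriv θ s - r s * (deriv θ s) ^ 3 / 2
      - r s * deriv (deriv θ) s * deriv r s - (deriv r s) ^ 2 * deriv θ s)

/-- Along any `C²` solution of the static scale-invariant system (on an open interval),
the geodesic curvature `k` satisfies `k = d/ds(−(1/2) r^{−1/2} θ)`, equivalently
`k = r^{−1/2}(ṙθ/(4r) − θ̇/2)`; consequently `∫_{s₁}^{s₂} k ds = 0` whenever
`θ(s₁) = 0 = θ(s₂)`. -/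
theorem static_curvature_total_integral_zero
    (r θ : ℝ → ℝ) (a b : ℝ)
    (hr : ContDiff ℝ 2 r) (hθ : ContDiff ℝ 2 θ)
    (hrpos : ∀ s ∈ Set.Ioo a b, 0 < r s)
    (heq₁ : ∀ s ∈ Set.Ioo a b,
      4 * (r s) ^ 2 * deriv (deriv r) s = r s * θ s * deriv r s * deriv θ s)
    (heq₂ : ∀ s ∈ Set.Ioo a b,
      4 * (r s) ^ 2 * deriv (deriv θ) s + 2 * r s * deriv r s * deriv θ s
        + θ s * (deriv r s) ^ 2 = 0)
    (hunit : ∀ s ∈ Set.Ioo a b, (deriv r s) ^ 2 + r s * (deriv θ s) ^ 2 = 1) :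
    (∀ s ∈ Set.Ioo a b,
      staticCurvature r θ s =
        deriv (fun u => -(1 / 2) * (Real.sqrt (r u))⁻¹ * θ u) s ∧
      staticCurvature r θ s =
        (Real.sqrt (r s))⁻¹ * (deriv r s * θ s / (4 * r s) - deriv θ s / 2)) ∧
    ∀ s₁ ∈ Set.Ioo a b, ∀ s₂ ∈ Set.Ioo a b, θ s₁ = 0 → θ s₂ = 0 →
      ∫ s in s₁..s₂, staticCurvature r θ s = 0 := by
  have hrd : Differentiable ℝ r := hr.differentiable (by norm_num)
  have hθd : Differentiable ℝ θ := hθ.differentiable (by norm_num)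
  -- key algebraic identity
  have key : ∀ s ∈ Set.Ioo a b,
      staticCurvature r θ s =
        (Real.sqrt (r s))⁻¹ * (deriv r s * θ s / (4 * r s) - deriv θ s / 2) := by
    intro s hs
    have hr0 : (0:ℝ) < r s := hrpos s hs
    have h1 := heq₁ s hs
    have h2 := heq₂ s hs
    have h3 := hunit s hs
    unfold staticCurvature
    congr 1
    field_simp
    linear_combination 2 * deriv θ s * h1 - 2 * deriv r s * h2
      + 2 * (deriv r s * θ s - 2 * r s * deriv θ s) * h3
  -- derivative identity
  have main : ∀ s ∈ Set.Ioo a b,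
      HasDerivAt (fun u => -(1 / 2) * (Real.sqrt (r u))⁻¹ * θ u)
        (staticCurvature r θ s) s := by
    intro s hs
    have hr0 : (0:ℝ) < r s := hrpos s hs
    set sq := Real.sqrt (r s) with hsqdef
    have hsqpos : 0 < sq := Real.sqrt_pos.mpr hr0
    have hsq2 : sq ^ 2 = r s := Real.sq_sqrt hr0.le
    have h1 : HasDerivAt r (deriv r s) s := (hrd s).hasDerivAt
    have hsqrt : HasDerivAt (fun u => Real.sqrt (r u))
        (1 / (2 * sq) * deriv r s) s :=
      (Real.hasDerivAt_sqrt hr0.ne').comp s h1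
    have hinv : HasDerivAt (fun u => (Real.sqrt (r u))⁻¹)
        (-(1 / (2 * sq) * deriv r s) / sq ^ 2) s := hsqrt.inv hsqpos.ne'
    have hg : HasDerivAt (fun u => -(1 / 2) * (Real.sqrt (r u))⁻¹ * θ u)
        ((-(1 / 2) * (-(1 / (2 * sq) * deriv r s) / sq ^ 2)) * θ s
          + (-(1 / 2) * sq⁻¹) * deriv θ s) s :=
      (hinv.const_mul (-(1 / 2))).mul (hθd s).hasDerivAt
    have hval : (-(1 / 2) * (-(1 / (2 * sq) * deriv r s) / sq ^ 2)) * θ s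
          + (-(1 / 2) * sq⁻¹) * deriv θ s
        = staticCurvature r θ s := by
      rw [key s hs, ← hsqdef, ← hsq2]
      field_simp
      ring
    exact hval ▸ hg
  constructor
  · intro s hs
    exact ⟨((main s hs).deriv).symm, key s hs⟩
  · intro s₁ hs₁ s₂ hs₂ hθ₁ hθ₂
    have hsub : Set.uIcc s₁ s₂ ⊆ Set.Ioo a b :=
      (Set.ordConnected_Ioo).uIcc_subset hs₁ hs₂
    have hcont : ContinuousOn (staticCurvature r θ) (Set.Ioo a b) := by
      have hdr1 : ContDiff ℝ 1 (deriv r) :=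
        (contDiff_succ_iff_deriv.mp (by exact_mod_cast hr : ContDiff ℝ (1+1) r)).2.2
      have hdθ1 : ContDiff ℝ 1 (deriv θ) :=
        (contDiff_succ_iff_deriv.mp (by exact_mod_cast hθ : ContDiff ℝ (1+1) θ)).2.2
      have c1 : Continuous (deriv r) := hdr1.continuous
      have c2 : Continuous (deriv θ) := hdθ1.continuous
      have c3 : Continuous (deriv (deriv r)) := hdr1.continuous_deriv le_rfl
      have c4 : Continuous (deriv (deriv θ)) := hdθ1.continuous_deriv le_rfl
      unfold staticCurvature
      apply ContinuousOn.mul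
      · exact ((Real.continuous_sqrt.comp hr.continuous).continuousOn).inv₀
          fun x hx => (Real.sqrt_pos.mpr (hrpos x hx)).ne'
      · have cr : Continuous r := hr.continuous
        have cθ : Continuous θ := hθ.continuous
        fun_prop
    have hint : IntervalIntegrable (staticCurvature r θ) MeasureTheory.volume s₁ s₂ :=
      (hcont.mono hsub).intervalIntegrable
    have := intervalIntegral.integral_eq_sub_of_hasDerivAt
      (fun x hx => main x (hsub hx)) hint
    rw [this, hθ₁, hθ₂]
    ring
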